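/- Let $a, b, c \in \mathbb{R}$ with $b > 0$, $c > 0$, and $c^2 \le ab$. For $t > 0$ define $\phi(t) = \frac{a - bt + \sqrt{(a-bt)^2 + 4c^2 t}}{2c}$. Then $\frac{c}{b} \le \phi(t) \le \frac{a}{c}$ for all $t > 0$. -/
import Mathlib

theorem stmt_17 (a b c : ℝ) (hb : 0 < b) (hc : 0 < c) (hcab : c ^ 2 ≤ a * b)
    (t : ℝ) (ht : 0 < t) :
    c / b ≤ (a - b * t + Real.sqrt ((a - b * t) ^ 2 + 4 * c ^ 2 * t)) / (2 * c) ∧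
    (a - b * t + Real.sqrt ((a - b * t) ^ 2 + 4 * c ^ 2 * t)) / (2 * c) ≤ a / c := by
  have ha : 0 < a := by nlinarith
  have hD2 : (0:ℝ) ≤ (a - b*t)^2 + 4*c^2*t := by positivity
  set D := Real.sqrt ((a - b * t) ^ 2 + 4 * c ^ 2 * t) with hD
  have hDnn : 0 ≤ D := Real.sqrt_nonneg _
  have hDsq : D^2 = (a - b*t)^2 + 4*c^2*t := Real.sq_sqrt hD2
  constructor
  · rw [div_le_div_iff₀ hb (by positivity)]
    have key : 2*c^2 - (a - b*t)*b ≤ D*b := by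
      rcases le_or_gt (2*c^2 - (a - b*t)*b) 0 with h|h
      · exact h.trans (mul_nonneg hDnn hb.le)
      · have hsq : (2*c^2 - (a - b*t)*b)^2 ≤ (D*b)^2 := by
          rw [mul_pow, hDsq]; nlinarith
        exact (pow_le_pow_iff_left₀ h.le (mul_nonneg hDnn hb.le) two_ne_zero).mp hsq
    nlinarith
  · rw [div_le_div_iff₀ (by positivity) hc]
    have key : D ≤ a + b*t := by
      have hsq : D^2 ≤ (a + b*t)^2 := by rw [hDsq]; nlinarith
      exact (pow_le_pow_iff_left₀ hDnn (by positivity) two_ne_zero).mp hsq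
    nlinarith
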